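/- Let Υ be (the topological realization of) a finite tree, let p be a vertex of valence 1 on the boundary of Υ, let e be the unique edge connecting p to a vertex q of Υ, and let Υ' denote the closure of Υ minus the closed edge e (so Υ' contains q but neither e nor p). For 1 ≤ n ≤ N set Σ_n := {x ∈ C^N(Υ) : x_n = p} and Σ'_n := {x ∈ C^N(Υ') : x_n = q}. Then C^N(Υ) is homeomorphic to the space obtained from C^N(Υ') by gluing, for each n = 1,…,N, the space (Σ_n × (0,1]) ∪ (Σ'_n × {0}) to C^N(Υ') along Σ'_n × {0} (identifying Σ'_n × {0} with Σ'_n ⊂ C^N(Υ')). -/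

import Mathlib

set_option linter.unusedSectionVars false
set_option linter.unusedVariables false
set_option maxHeartbeats 1000000

/-- The ordered configuration space of `N` distinct labeled points in `X`,
topologized as a subspace of the product `X^N`:
`C^N(X) = {(x₁,…,x_N) ∈ X^N : x_i ≠ x_j for i ≠ j}`. -/
abbrev Config (N : ℕ) (X : Type) [TopologicalSpace X] : Type :=
  {f : Fin N → X // Function.Injective f}

namespace SimpleGraph

variable {V : Type} [Fintype V] [DecidableEq V]

/-- The topological realization of a finite simple graph: the subspace of `V → ℝ`
of convex combinations supported on a single vertex or on the two endpoints of an
edge (vertices are realized as the standard basis points, edges as the segments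
joining the basis points of their endpoints). -/
abbrev Realization (G : SimpleGraph V) : Type :=
  {f : V → ℝ // (∀ v, 0 ≤ f v) ∧ (∑ v, f v) = 1 ∧
    ∃ u w, (u = w ∨ G.Adj u w) ∧ ∀ x, f x ≠ 0 → x = u ∨ x = w}

/-- The point of the topological realization corresponding to a vertex. -/
def vertexPoint (G : SimpleGraph V) (v : V) : G.Realization :=
  ⟨fun w => if w = v then (1 : ℝ) else 0,
    fun w => by dsimp only; split <;> norm_num,
    by simp,
    v, v, Or.inl rfl,
    fun x hx => Or.inl (by by_contra h; simp [h] at hx)⟩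

end SimpleGraph

section Decomposition

variable {V : Type} [Fintype V] [DecidableEq V] (G : SimpleGraph V) (p q : V) (N : ℕ)

/-- The subtree `Υ'`: the closure of `Υ` minus the closed edge at the boundary vertex
`p`, realized as the subspace of points of the realization not supported on `p`. -/
abbrev SubtreeOff : Type := {x : G.Realization // x.val p = 0}

/-- `Σ_n`: configurations on `Υ` whose `n`-th point is at the vertex `p`. -/
abbrev SigmaEnd (n : Fin N) : Type :=
  {x : Config N G.Realization // x.val n = G.vertexPoint p}

/-- The piece `(Σ_n × (0,1]) ∪ (Σ'_n × {0})`, as a subspace of `Σ_n × [0,1]`: at height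
`0` only the configurations lying in the natural copy of `Σ'_n` inside `Σ_n` are kept,
i.e. those whose points other than the `n`-th lie in `Υ'` and avoid the vertex `q`. -/
abbrev GluePiece (n : Fin N) : Type :=
  {z : SigmaEnd G p N n × unitInterval //
    z.2 ≠ 0 ∨ ∀ m, m ≠ n → ((z.1.val.val m).val p = 0 ∧ z.1.val.val m ≠ G.vertexPoint q)}

/-- The gluing relation: a point of `Σ'_n × {0}` in the `n`-th piece is identified with
the corresponding configuration in `C^N(Υ')`, namely the one agreeing with it away from
`n` and having its `n`-th point at `q`. -/
def glueRel (a b : Config N (SubtreeOff G p) ⊕ (Σ n : Fin N, GluePiece G p q N n)) :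
    Prop :=
  ∃ (n : Fin N) (z : GluePiece G p q N n) (y : Config N (SubtreeOff G p)),
    z.val.2 = 0 ∧ ((y.val n).val = G.vertexPoint q) ∧
    (∀ m, m ≠ n → (y.val m).val = z.val.1.val.val m) ∧
    a = Sum.inl y ∧ b = Sum.inr ⟨n, z⟩

end Decomposition

section Helpers

open Filter Topology

variable {V : Type} [Fintype V] [DecidableEq V] {G : SimpleGraph V} {p q : V}

/-- The point on the edge from `q` to `p` at parameter `s`. -/
def ept (p q : V) (s : ℝ) : V → ℝ :=
  fun v => if v = p then s else if v = q then 1 - s else 0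

lemma ept_apply_p (s : ℝ) : ept p q s p = s := if_pos rfl

lemma ept_apply_q (hne : p ≠ q) (s : ℝ) : ept p q s q = 1 - s := by
  unfold ept; rw [if_neg hne.symm, if_pos rfl]

lemma ept_apply_other {v : V} (hvp : v ≠ p) (hvq : v ≠ q) (s : ℝ) : ept p q s v = 0 := by
  unfold ept; rw [if_neg hvp, if_neg hvq]

lemma ept_inj (hne : p ≠ q) {s s' : ℝ} (h : ept p q s = ept p q s') : s = s' := by
  have := congrFun h p; rwa [ept_apply_p, ept_apply_p] at this

lemma ept_sum (hne : p ≠ q) (s : ℝ) : ∑ v, ept p q s v = 1 := by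
  have h : ∀ v, ept p q s v = (if v = p then s else 0) + (if v = q then 1 - s else 0) := by
    intro v; unfold ept
    by_cases hvp : v = p
    · subst hvp; simp [hne]
    by_cases hvq : v = q
    · subst hvq; simp [hne.symm, hvp]
    · simp [hvp, hvq]
  simp only [h, Finset.sum_add_distrib, Finset.sum_ite_eq', Finset.mem_univ, if_true]
  ring

lemma ept_mem (hpq : G.Adj p q) {s : ℝ} (h0 : 0 ≤ s) (h1 : s ≤ 1) :
    (∀ v, 0 ≤ ept p q s v) ∧ (∑ v, ept p q s v) = 1 ∧
      ∃ u w, (u = w ∨ G.Adj u w) ∧ ∀ x, ept p q s x ≠ 0 → x = u ∨ x = w := by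
  refine ⟨?_, ept_sum hpq.ne s, p, q, Or.inr hpq, ?_⟩
  · intro v; unfold ept; split_ifs <;> linarith
  · intro x hx
    by_cases hxp : x = p
    · exact Or.inl hxp
    by_cases hxq : x = q
    · exact Or.inr hxq
    · exact absurd (ept_apply_other hxp hxq s) hx

/-- The realization point on the edge from `q` to `p` at parameter `s`. -/
def Ept (hpq : G.Adj p q) (s : ℝ) (h0 : 0 ≤ s) (h1 : s ≤ 1) : G.Realization :=
  ⟨ept p q s, ept_mem hpq h0 h1⟩

lemma vertexPoint_p_val (hne : p ≠ q) : (G.vertexPoint p).1 = ept p q 1 := by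
  funext v
  show (if v = p then (1:ℝ) else 0) = ept p q 1 v
  by_cases hvp : v = p
  · subst hvp; rw [ept_apply_p]; simp
  by_cases hvq : v = q
  · subst hvq; rw [ept_apply_q hne]; simp [hvp]
  · rw [ept_apply_other hvp hvq]; simp [hvp]

lemma vertexPoint_q_val (hne : p ≠ q) : (G.vertexPoint q).1 = ept p q 0 := by
  funext v
  show (if v = q then (1:ℝ) else 0) = ept p q 0 v
  by_cases hvp : v = p
  · subst hvp; rw [ept_apply_p]; simp [hne]
  by_cases hvq : v = q
  · subst hvq; rw [ept_apply_q hne]; simp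
  · rw [ept_apply_other hvp hvq]; simp [hvq]

lemma vertexPoint_apply_self (v : V) : (G.vertexPoint v).1 v = 1 := if_pos rfl

lemma Realization.nonneg (f : G.Realization) (v : V) : 0 ≤ f.1 v := f.2.1 v

lemma Realization.le_one (f : G.Realization) (v : V) : f.1 v ≤ 1 := by
  obtain ⟨hnn, hsum, -⟩ := f.2
  calc f.1 v ≤ ∑ u, f.1 u := Finset.single_le_sum (fun u _ => hnn u) (Finset.mem_univ v)
    _ = 1 := hsum

variable [DecidableRel G.Adj]

lemma adj_p_eq (hp : G.degree p = 1) (hpq : G.Adj p q) {w : V} (h : G.Adj p w) : w = q := by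
  obtain ⟨a, ha⟩ := Finset.card_eq_one.mp hp
  have h1 : w ∈ G.neighborFinset p := by simpa [SimpleGraph.mem_neighborFinset] using h
  have h2 : q ∈ G.neighborFinset p := by simpa [SimpleGraph.mem_neighborFinset] using hpq
  rw [ha, Finset.mem_singleton] at h1 h2
  rw [h1, ← h2]

/-- Any realization point with positive `p`-coordinate lies on the edge `pq`. -/
lemma support_ept (hp : G.degree p = 1) (hpq : G.Adj p q) (f : G.Realization)
    (hf : f.1 p ≠ 0) : f.1 = ept p q (f.1 p) := by
  have hne : p ≠ q := hpq.ne
  obtain ⟨hnn, hsum, u, w, huw, hsupp⟩ := f.2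
  have hsub : ∀ x, f.1 x ≠ 0 → x = p ∨ x = q := by
    rcases huw with heq | hadj
    · subst heq
      have hpu : p = u := (hsupp p hf).elim id id
      subst hpu
      intro x hx; exact Or.inl ((hsupp x hx).elim id id)
    · rcases hsupp p hf with hpu | hpw
      · subst hpu
        have hwq : w = q := adj_p_eq hp hpq hadj
        subst hwq; exact hsupp
      · subst hpw
        have huq : u = q := adj_p_eq hp hpq hadj.symm
        subst huq
        intro x hx; exact (hsupp x hx).symm
  have hq : f.1 q = 1 - f.1 p := by
    have hz : ∀ x ∈ Finset.univ, x ∉ ({p, q} : Finset V) → f.1 x = 0 := by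
      intro x _ hx
      by_contra h
      rcases hsub x h with rfl | rfl <;> simp at hx
    have hsum2 : ∑ v ∈ ({p, q} : Finset V), f.1 v = 1 :=
      (Finset.sum_subset (Finset.subset_univ _) hz).trans hsum
    rw [Finset.sum_pair hne] at hsum2; linarith
  funext v
  by_cases hvp : v = p
  · subst hvp; rw [ept_apply_p]
  by_cases hvq : v = q
  · subst hvq; rw [ept_apply_q hne, hq]
  · rw [ept_apply_other hvp hvq]
    by_contra h
    rcases hsub v h with rfl | rfl
    · exact hvp rfl
    · exact hvq rfl

lemma eq_vertexPoint_p_of_coord_one (hp : G.degree p = 1) (hpq : G.Adj p q)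
    (f : G.Realization) (h : f.1 p = 1) : f = G.vertexPoint p := by
  apply Subtype.ext
  rw [support_ept hp hpq f (by rw [h]; exact one_ne_zero), h, vertexPoint_p_val hpq.ne]

/-- The scaling map compressing the edge `pq` towards `q` by a factor `t`. -/
def scale (p q : V) (t : ℝ) (f : V → ℝ) : V → ℝ :=
  fun v => if v = p then t * f p else if v = q then f q + (1 - t) * f p else f v

lemma scale_apply_p (t : ℝ) (f : V → ℝ) : scale p q t f p = t * f p := if_pos rfl

lemma scale_apply_q (hne : p ≠ q) (t : ℝ) (f : V → ℝ) :
    scale p q t f q = f q + (1 - t) * f p := by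
  unfold scale; rw [if_neg hne.symm, if_pos rfl]

lemma scale_apply_other {v : V} (hvp : v ≠ p) (hvq : v ≠ q) (t : ℝ) (f : V → ℝ) :
    scale p q t f v = f v := by
  unfold scale; rw [if_neg hvp, if_neg hvq]

lemma scale_eq_self (hne : p ≠ q) {f : V → ℝ} (h : f p = 0) (t : ℝ) : scale p q t f = f := by
  funext v
  by_cases hvp : v = p
  · subst hvp; rw [scale_apply_p, h, mul_zero]
  by_cases hvq : v = q
  · subst hvq; rw [scale_apply_q hne, h, mul_zero, add_zero]
  · rw [scale_apply_other hvp hvq]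

lemma scale_ept (hne : p ≠ q) (t s : ℝ) : scale p q t (ept p q s) = ept p q (t * s) := by
  funext v
  by_cases hvp : v = p
  · subst hvp; rw [scale_apply_p, ept_apply_p, ept_apply_p]
  by_cases hvq : v = q
  · subst hvq; rw [scale_apply_q hne, ept_apply_q hne, ept_apply_q hne, ept_apply_p]; ring
  · rw [scale_apply_other hvp hvq, ept_apply_other hvp hvq, ept_apply_other hvp hvq]

lemma scale_inj (hne : p ≠ q) {t : ℝ} (ht : t ≠ 0) : Function.Injective (scale p q t) := by
  intro f g h
  have hp' : f p = g p := by
    have := congrFun h p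
    rw [scale_apply_p, scale_apply_p] at this
    exact mul_left_cancel₀ ht this
  funext v
  by_cases hvp : v = p
  · rwa [hvp]
  by_cases hvq : v = q
  · subst hvq
    have := congrFun h v
    rw [scale_apply_q hne, scale_apply_q hne, hp'] at this
    linarith
  · have := congrFun h v
    rwa [scale_apply_other hvp hvq, scale_apply_other hvp hvq] at this

lemma scale_mem (hp : G.degree p = 1) (hpq : G.Adj p q) (f : G.Realization) {t : ℝ}
    (h0 : 0 ≤ t) (h1 : t ≤ 1) :
    (∀ v, 0 ≤ scale p q t f.1 v) ∧ (∑ v, scale p q t f.1 v) = 1 ∧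
      ∃ u w, (u = w ∨ G.Adj u w) ∧ ∀ x, scale p q t f.1 x ≠ 0 → x = u ∨ x = w := by
  by_cases hf : f.1 p = 0
  · rw [scale_eq_self hpq.ne hf]; exact f.2
  · rw [support_ept hp hpq f hf, scale_ept hpq.ne]
    have h0' : 0 ≤ f.1 p := Realization.nonneg f p
    have h1' : f.1 p ≤ 1 := Realization.le_one f p
    exact ept_mem hpq (mul_nonneg h0 h0') (by nlinarith)

/-- The scaling self-map of the realization. -/
def Scale (hp : G.degree p = 1) (hpq : G.Adj p q) (t : unitInterval) (f : G.Realization) :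
    G.Realization :=
  ⟨scale p q t.1 f.1, scale_mem hp hpq f t.2.1 t.2.2⟩

lemma Scale_val (hp : G.degree p = 1) (hpq : G.Adj p q) (t : unitInterval)
    (f : G.Realization) : (Scale hp hpq t f).1 = scale p q t.1 f.1 := rfl

lemma scale_vertexPoint_p (hp : G.degree p = 1) (hpq : G.Adj p q) (t : ℝ) :
    scale p q t (G.vertexPoint p).1 = ept p q t := by
  rw [vertexPoint_p_val hpq.ne, scale_ept hpq.ne, mul_one]

lemma continuous_Scale (hp : G.degree p = 1) (hpq : G.Adj p q) :
    Continuous (fun z : unitInterval × G.Realization => Scale hp hpq z.1 z.2) := by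
  apply Continuous.subtype_mk
  apply continuous_pi
  intro v
  have hct : Continuous (fun z : unitInterval × G.Realization => (z.1 : ℝ)) :=
    continuous_subtype_val.comp continuous_fst
  have hcp : Continuous (fun z : unitInterval × G.Realization => z.2.1 p) :=
    (continuous_apply p).comp (continuous_subtype_val.comp continuous_snd)
  have hcq : Continuous (fun z : unitInterval × G.Realization => z.2.1 q) :=
    (continuous_apply q).comp (continuous_subtype_val.comp continuous_snd)
  have hcv : Continuous (fun z : unitInterval × G.Realization => z.2.1 v) :=
    (continuous_apply v).comp (continuous_subtype_val.comp continuous_snd)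
  show Continuous fun z : unitInterval × G.Realization => scale p q (z.1 : ℝ) z.2.1 v
  unfold scale
  by_cases hvp : v = p
  · simp only [if_pos hvp]
    subst hvp
    exact hct.mul hcp
  by_cases hvq : v = q
  · simp only [if_neg hvp, if_pos hvq]
    subst hvq
    exact hcq.add ((continuous_const.sub hct).mul hcp)
  · simp only [if_neg hvp, if_neg hvq]
    exact hcv

end Helpers

section Main

open Filter Topology

variable {V : Type} [Fintype V] [DecidableEq V] {G : SimpleGraph V} [DecidableRel G.Adj]
  {p q : V} {N : ℕ}

/-- Inclusion of configurations on the subtree into configurations on the tree. -/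
def glueH0 : Config N (SubtreeOff G p) → Config N G.Realization :=
  fun y => ⟨fun m => (y.1 m).1, fun a b h => y.2 (Subtype.ext h)⟩

lemma unitInterval_ne_zero {t : unitInterval} (h : (t : ℝ) ≠ 0) : t ≠ 0 :=
  fun h' => h (congrArg Subtype.val h')

lemma unitInterval_val_ne_zero {t : unitInterval} (h : t ≠ 0) : (t : ℝ) ≠ 0 :=
  fun h' => h (Subtype.ext h')

/-- The map from the `n`-th glue piece into configurations on the tree. -/
def glueH1 (hp : G.degree p = 1) (hpq : G.Adj p q) (n : Fin N) (z : GluePiece G p q N n) :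
    Config N G.Realization :=
  ⟨fun m => Scale hp hpq z.1.2 (z.1.1.1.1 m), by
    by_cases ht : (z.1.2 : ℝ) = 0
    · have hcond := z.2.resolve_left (fun h => h (Subtype.ext ht))
      intro a b hab
      have hab' : scale p q (z.1.2 : ℝ) (z.1.1.1.1 a).1 = scale p q (z.1.2 : ℝ) (z.1.1.1.1 b).1 :=
        congrArg Subtype.val hab
      by_cases han : a = n
      · by_cases hbn : b = n
        · rw [han, hbn]
        · exfalso
          rw [han, z.1.1.2] at hab'
          rw [scale_eq_self hpq.ne (hcond b hbn).1] at hab'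
          rw [scale_vertexPoint_p hp hpq, ht] at hab'
          exact (hcond b hbn).2 (Subtype.ext (hab'.symm.trans (vertexPoint_q_val hpq.ne).symm))
      · by_cases hbn : b = n
        · exfalso
          rw [hbn, z.1.1.2] at hab'
          rw [scale_eq_self hpq.ne (hcond a han).1] at hab'
          rw [scale_vertexPoint_p hp hpq, ht] at hab'
          exact (hcond a han).2 (Subtype.ext (hab'.trans (vertexPoint_q_val hpq.ne).symm))
        · rw [scale_eq_self hpq.ne (hcond a han).1, scale_eq_self hpq.ne (hcond b hbn).1] at hab'
          exact z.1.1.1.2 (Subtype.ext hab')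
    · intro a b hab
      exact z.1.1.1.2 (Subtype.ext (scale_inj hpq.ne ht (congrArg Subtype.val hab)))⟩

lemma glueH1_val (hp : G.degree p = 1) (hpq : G.Adj p q) (n : Fin N)
    (z : GluePiece G p q N n) (m : Fin N) :
    ((glueH1 hp hpq n z).1 m).1 = scale p q (z.1.2 : ℝ) (z.1.1.1.1 m).1 := rfl

/-- The total map from the disjoint union to configurations on the tree. -/
def Hsum (hp : G.degree p = 1) (hpq : G.Adj p q) :
    (Config N (SubtreeOff G p) ⊕ Σ n : Fin N, GluePiece G p q N n) → Config N G.Realization :=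
  Sum.elim glueH0 (fun s => glueH1 hp hpq s.1 s.2)

lemma Hsum_respects (hp : G.degree p = 1) (hpq : G.Adj p q) :
    ∀ a b, glueRel G p q N a b → Hsum hp hpq a = Hsum hp hpq b := by
  rintro a b ⟨n, z, y, ht, hyn, hym, rfl, rfl⟩
  apply Subtype.ext; funext m
  show (y.1 m).1 = Scale hp hpq z.1.2 (z.1.1.1.1 m)
  have ht' : (z.1.2 : ℝ) = 0 := congrArg Subtype.val ht
  apply Subtype.ext
  by_cases hm : m = n
  · subst hm
    rw [hyn]
    show (G.vertexPoint q).1 = scale p q (z.1.2 : ℝ) (z.1.1.1.1 m).1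
    rw [z.1.1.2, scale_vertexPoint_p hp hpq, ht', vertexPoint_q_val hpq.ne]
  · have h0 : (z.1.1.1.1 m).1 p = 0 := by
      rw [← hym m hm]; exact ((y.1 m).2 : ((y.1 m).1).1 p = 0)
    show ((y.1 m).1).1 = scale p q (z.1.2 : ℝ) (z.1.1.1.1 m).1
    rw [scale_eq_self hpq.ne h0, hym m hm]

lemma continuous_glueH0 : Continuous (glueH0 : Config N (SubtreeOff G p) → _) := by
  apply Continuous.subtype_mk
  apply continuous_pi
  intro m
  exact continuous_subtype_val.comp ((continuous_apply m).comp continuous_subtype_val)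

lemma continuous_glueH1 (hp : G.degree p = 1) (hpq : G.Adj p q) (n : Fin N) :
    Continuous (glueH1 hp hpq n) := by
  apply Continuous.subtype_mk
  apply continuous_pi
  intro m
  have h1 : Continuous (fun z : GluePiece G p q N n =>
      ((z.1.2, z.1.1.1.1 m) : unitInterval × G.Realization)) := by
    apply Continuous.prodMk
    · exact continuous_snd.comp continuous_subtype_val
    · exact (continuous_apply m).comp (continuous_subtype_val.comp
        (continuous_subtype_val.comp (continuous_fst.comp continuous_subtype_val)))
  exact (continuous_Scale hp hpq).comp h1

lemma continuous_Hsum (hp : G.degree p = 1) (hpq : G.Adj p q) :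
    Continuous (Hsum hp hpq (N := N)) := by
  apply Continuous.sumElim
  · exact continuous_glueH0
  · apply continuous_sigma
    intro n
    exact continuous_glueH1 hp hpq n

/-- Inverse rescaling of a configuration with maximal `p`-coordinate `t` at index `n`. -/
noncomputable def unscale (hpq : G.Adj p q) (w : Config N G.Realization) (t : ℝ)
    (ht0 : 0 < t) (hmax : ∀ m, (w.1 m).1 p ≤ t) : Fin N → G.Realization :=
  fun m => if h : (w.1 m).1 p = 0 then w.1 m else
    Ept hpq ((w.1 m).1 p / t) (div_nonneg (Realization.nonneg _ p) ht0.le)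
      ((div_le_one ht0).mpr (hmax m))

lemma scale_unscale (hp : G.degree p = 1) (hpq : G.Adj p q) (w : Config N G.Realization)
    (t : ℝ) (ht0 : 0 < t) (hmax : ∀ m, (w.1 m).1 p ≤ t) (m : Fin N) :
    scale p q t (unscale hpq w t ht0 hmax m).1 = (w.1 m).1 := by
  unfold unscale
  by_cases h : (w.1 m).1 p = 0
  · rw [dif_pos h, scale_eq_self hpq.ne h]
  · rw [dif_neg h]
    show scale p q t (ept p q ((w.1 m).1 p / t)) = (w.1 m).1
    rw [scale_ept hpq.ne, mul_div_cancel₀ _ (ne_of_gt ht0)]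
    exact (support_ept hp hpq (w.1 m) h).symm

lemma unscale_inj (hp : G.degree p = 1) (hpq : G.Adj p q) (w : Config N G.Realization)
    (t : ℝ) (ht0 : 0 < t) (hmax : ∀ m, (w.1 m).1 p ≤ t) :
    Function.Injective (unscale hpq w t ht0 hmax) := by
  intro a b hab
  apply w.2
  apply Subtype.ext
  rw [← scale_unscale hp hpq w t ht0 hmax a, ← scale_unscale hp hpq w t ht0 hmax b,
    congrArg Subtype.val hab]

lemma unscale_n (hp : G.degree p = 1) (hpq : G.Adj p q) (w : Config N G.Realization)
    (t : ℝ) (ht0 : 0 < t) (hmax : ∀ m, (w.1 m).1 p ≤ t) (n : Fin N)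
    (htn : (w.1 n).1 p = t) : unscale hpq w t ht0 hmax n = G.vertexPoint p := by
  apply eq_vertexPoint_p_of_coord_one hp hpq
  unfold unscale
  rw [dif_neg (by rw [htn]; exact ne_of_gt ht0)]
  show ept p q ((w.1 n).1 p / t) p = 1
  rw [ept_apply_p, htn, div_self (ne_of_gt ht0)]

lemma Hsum_surjective (hp : G.degree p = 1) (hpq : G.Adj p q) :
    Function.Surjective (Hsum hp hpq (N := N)) := by
  intro w
  by_cases hall : ∀ m, (w.1 m).1 p = 0
  · refine ⟨Sum.inl ⟨fun m => ⟨w.1 m, hall m⟩, ?_⟩, ?_⟩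
    · intro a b hab
      exact w.2 (congrArg Subtype.val hab)
    · apply Subtype.ext; funext m; rfl
  · push_neg at hall
    obtain ⟨m₀, hm₀⟩ := hall
    obtain ⟨n, -, hn⟩ := Finset.exists_max_image Finset.univ (fun m => (w.1 m).1 p)
      ⟨m₀, Finset.mem_univ m₀⟩
    have hmax : ∀ m, (w.1 m).1 p ≤ (w.1 n).1 p := fun m => hn m (Finset.mem_univ m)
    have ht0 : 0 < (w.1 n).1 p :=
      lt_of_lt_of_le (lt_of_le_of_ne (Realization.nonneg _ p) (Ne.symm hm₀)) (hmax m₀)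
    have ht1 : (w.1 n).1 p ≤ 1 := Realization.le_one _ p
    let x : Config N G.Realization :=
      ⟨unscale hpq w _ ht0 hmax, unscale_inj hp hpq w _ ht0 hmax⟩
    let xe : SigmaEnd G p N n := ⟨x, unscale_n hp hpq w _ ht0 hmax n rfl⟩
    let tI : unitInterval := ⟨(w.1 n).1 p, ht0.le, ht1⟩
    have htI : tI ≠ 0 := fun h => ne_of_gt ht0 (congrArg Subtype.val h)
    refine ⟨Sum.inr ⟨n, ⟨(xe, tI), Or.inl htI⟩⟩, ?_⟩
    apply Subtype.ext; funext m
    apply Subtype.ext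
    exact scale_unscale hp hpq w _ ht0 hmax m

lemma glue_mixed (hp : G.degree p = 1) (hpq : G.Adj p q) {n : Fin N}
    (y : Config N (SubtreeOff G p)) (z : GluePiece G p q N n)
    (h : glueH0 y = glueH1 hp hpq n z) :
    Quot.mk (glueRel G p q N) (Sum.inl y) = Quot.mk (glueRel G p q N) (Sum.inr ⟨n, z⟩) := by
  have hne := hpq.ne
  have hv : ∀ m, ((y.1 m).1).1 = scale p q (z.1.2 : ℝ) (z.1.1.1.1 m).1 := fun m =>
    congrArg Subtype.val (congrFun (congrArg Subtype.val h) m)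
  have ht : (z.1.2 : ℝ) = 0 := by
    have h1 := congrFun (hv n) p
    rw [z.1.1.2, scale_vertexPoint_p hp hpq, ept_apply_p] at h1
    exact h1.symm.trans (y.1 n).2
  have hcond := z.2.resolve_left (fun hc => hc (Subtype.ext ht))
  apply Quot.sound
  refine ⟨n, z, y, Subtype.ext ht, ?_, ?_, rfl, rfl⟩
  · apply Subtype.ext
    have h2 := hv n
    rw [z.1.1.2, scale_vertexPoint_p hp hpq, ht] at h2
    rw [h2, vertexPoint_q_val hne]
  · intro m hm
    apply Subtype.ext
    rw [hv m, scale_eq_self hne (hcond m hm).1]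

lemma Hsum_inj_quot (hp : G.degree p = 1) (hpq : G.Adj p q) :
    ∀ a b, Hsum hp hpq (N := N) a = Hsum hp hpq b →
      Quot.mk (glueRel G p q N) a = Quot.mk (glueRel G p q N) b := by
  have hne := hpq.ne
  rintro (y | ⟨n, z⟩) (y' | ⟨n', z'⟩) hab
  · have hyy : y = y' := by
      apply Subtype.ext; funext m
      have h5 : ((y.1 m).1 : G.Realization) = (y'.1 m).1 :=
        congrFun (congrArg Subtype.val hab) m
      exact Subtype.ext h5
    rw [hyy]
  · exact glue_mixed hp hpq y z' hab
  · exact (glue_mixed hp hpq y' z hab.symm).symm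
  · have hv : ∀ m, scale p q (z.1.2 : ℝ) (z.1.1.1.1 m).1
        = scale p q (z'.1.2 : ℝ) (z'.1.1.1.1 m).1 := fun m =>
      congrArg Subtype.val (congrFun (congrArg Subtype.val hab) m)
    by_cases hnn : n = n'
    · subst hnn
      have htt : (z.1.2 : ℝ) = (z'.1.2 : ℝ) := by
        have h1 := congrFun (hv n) p
        rw [z.1.1.2, z'.1.1.2, scale_vertexPoint_p hp hpq, scale_vertexPoint_p hp hpq,
          ept_apply_p, ept_apply_p] at h1
        exact h1
      have hxx : ∀ m, z.1.1.1.1 m = z'.1.1.1.1 m := by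
        by_cases ht : (z.1.2 : ℝ) = 0
        · have ht' : (z'.1.2 : ℝ) = 0 := htt ▸ ht
          have hcond := z.2.resolve_left (fun hc => hc (Subtype.ext ht))
          have hcond' := z'.2.resolve_left (fun hc => hc (Subtype.ext ht'))
          intro m
          by_cases hm : m = n
          · subst hm
            exact (z.1.1.2).trans (z'.1.1.2).symm
          · have h2 := hv m
            rw [scale_eq_self hne (hcond m hm).1, scale_eq_self hne (hcond' m hm).1] at h2
            exact Subtype.ext h2
        · intro m
          apply Subtype.ext
          apply scale_inj hne ht
          rw [hv m, ← htt]
      have hz : z = z' := by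
        apply Subtype.ext
        apply Prod.ext
        · apply Subtype.ext; apply Subtype.ext; funext m
          exact hxx m
        · exact Subtype.ext htt
      rw [hz]
    · exfalso
      set t := (z.1.2 : ℝ) with ht_def
      set t' := (z'.1.2 : ℝ) with ht'_def
      have hs'lt : (z'.1.1.1.1 n).1 p < 1 := by
        rcases lt_or_eq_of_le (Realization.le_one (z'.1.1.1.1 n) p) with h | h
        · exact h
        · exact absurd (z'.1.1.1.2 ((eq_vertexPoint_p_of_coord_one hp hpq _ h).trans
            z'.1.1.2.symm)) hnn
      have hslt : (z.1.1.1.1 n').1 p < 1 := by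
        rcases lt_or_eq_of_le (Realization.le_one (z.1.1.1.1 n') p) with h | h
        · exact h
        · exact absurd (z.1.1.1.2 ((eq_vertexPoint_p_of_coord_one hp hpq _ h).trans
            z.1.1.2.symm)).symm hnn
      have h1 : t = t' * (z'.1.1.1.1 n).1 p := by
        have h2 := congrFun (hv n) p
        rw [z.1.1.2, scale_vertexPoint_p hp hpq, ept_apply_p, scale_apply_p] at h2
        exact h2
      have h2 : t' = t * (z.1.1.1.1 n').1 p := by
        have h3 := congrFun (hv n') p
        rw [z'.1.1.2, scale_vertexPoint_p hp hpq, ept_apply_p, scale_apply_p] at h3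
        exact h3.symm
      have hge0 : 0 ≤ t := z.1.2.2.1
      have hs0 : 0 ≤ (z.1.1.1.1 n').1 p := Realization.nonneg _ p
      have hs'0 : 0 ≤ (z'.1.1.1.1 n).1 p := Realization.nonneg _ p
      have ht0 : t = 0 := by
        by_contra htne
        have htpos : 0 < t := lt_of_le_of_ne hge0 (Ne.symm htne)
        have h5 : t = t * ((z.1.1.1.1 n').1 p * (z'.1.1.1.1 n).1 p) := by
          rw [h2] at h1; linear_combination h1
        have h6 : (z.1.1.1.1 n').1 p * (z'.1.1.1.1 n).1 p < 1 := by nlinarith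
        have h7 := mul_lt_mul_of_pos_left h6 htpos
        rw [mul_one] at h7
        linarith [h5]
      have ht0' : t' = 0 := by rw [ht0, zero_mul] at h2; exact h2
      have hcond' := z'.2.resolve_left (fun hc => hc (Subtype.ext ht0'))
      have h4 := hv n
      rw [z.1.1.2, scale_vertexPoint_p hp hpq, ht0, scale_eq_self hne (hcond' n hnn).1] at h4
      exact (hcond' n hnn).2 (Subtype.ext (h4.symm.trans (vertexPoint_q_val hne).symm))

lemma tendsto_config_iff {u : ℕ → Config N G.Realization} {w : Config N G.Realization} :
    Tendsto u atTop (nhds w) ↔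
      ∀ m v, Tendsto (fun k => ((u k).1 m).1 v) atTop (nhds ((w.1 m).1 v)) := by
  rw [tendsto_subtype_rng, tendsto_pi_nhds]
  refine forall_congr' fun m => ?_
  rw [tendsto_subtype_rng, tendsto_pi_nhds]

lemma tendsto_gluePiece {n : Fin N} {u : ℕ → GluePiece G p q N n} {z : GluePiece G p q N n}
    (hx : ∀ m v, Tendsto (fun k => ((u k).1.1.1.1 m).1 v) atTop (nhds ((z.1.1.1.1 m).1 v)))
    (ht : Tendsto (fun k => ((u k).1.2 : ℝ)) atTop (nhds (z.1.2 : ℝ))) :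
    Tendsto u atTop (nhds z) := by
  rw [tendsto_subtype_rng]
  refine Filter.Tendsto.prodMk_nhds ?_ ?_
  · rw [tendsto_subtype_rng, tendsto_subtype_rng, tendsto_pi_nhds]
    intro m
    rw [tendsto_subtype_rng, tendsto_pi_nhds]
    exact hx m
  · rw [tendsto_subtype_rng]
    exact ht

lemma glue_piece_limit (hp : G.degree p = 1) (hpq : G.Adj p q) {n : Fin N}
    (u : ℕ → GluePiece G p q N n) (w : Config N G.Realization)
    (hw : Tendsto (fun k => glueH1 hp hpq n (u k)) atTop (nhds w)) :
    ∃ z : GluePiece G p q N n, Tendsto u atTop (nhds z) ∧ glueH1 hp hpq n z = w := by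
  classical
  have hne := hpq.ne
  have hwc : ∀ m v, Tendsto (fun k => scale p q (((u k).1.2 : ℝ)) ((u k).1.1.1.1 m).1 v)
      atTop (nhds ((w.1 m).1 v)) := fun m v => tendsto_config_iff.mp hw m v
  set tk : ℕ → ℝ := fun k => ((u k).1.2 : ℝ) with htk_def
  set t : ℝ := (w.1 n).1 p with ht_def
  have htk : Tendsto tk atTop (nhds t) := by
    refine (hwc n p).congr (fun k => ?_)
    rw [(u k).1.1.2, scale_vertexPoint_p hp hpq, ept_apply_p]
  have ht0 : 0 ≤ t := Realization.nonneg _ p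
  have ht1 : t ≤ 1 := Realization.le_one _ p
  have hmax : ∀ m, (w.1 m).1 p ≤ t := by
    intro m
    refine le_of_tendsto_of_tendsto' (hwc m p) htk (fun k => ?_)
    rw [scale_apply_p]
    calc tk k * ((u k).1.1.1.1 m).1 p ≤ tk k * 1 :=
          mul_le_mul_of_nonneg_left (Realization.le_one _ p) ((u k).1.2.2.1)
      _ = tk k := mul_one _
  rcases eq_or_lt_of_le ht0 with hteq | htpos
  · -- case t = 0
    have ht0' : t = 0 := hteq.symm
    have htk0 : Tendsto tk atTop (nhds 0) := ht0' ▸ htk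
    have hwn : (w.1 n).1 = (G.vertexPoint q).1 := by
      funext v
      have h2 : ∀ k, scale p q (tk k) ((u k).1.1.1.1 n).1 v = ept p q (tk k) v := by
        intro k; rw [(u k).1.1.2, scale_vertexPoint_p hp hpq]
      rw [vertexPoint_q_val hne]
      refine tendsto_nhds_unique ((hwc n v).congr h2) ?_
      by_cases hvp : v = p
      · subst hvp; simp only [ept_apply_p]; exact htk0
      by_cases hvq : v = q
      · subst hvq
        simp only [ept_apply_q hne]
        simpa using (tendsto_const_nhds.sub htk0)
      · simp only [ept_apply_other hvp hvq]
        exact tendsto_const_nhds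
    have hw0 : ∀ m, (w.1 m).1 p = 0 := by
      intro m
      have h := hmax m
      rw [ht0'] at h
      exact le_antisymm h (Realization.nonneg _ p)
    have hwm_ne : ∀ m, m ≠ n → (w.1 m).1 ≠ (G.vertexPoint q).1 := by
      intro m hm hcontra
      exact hm (w.2 (Subtype.ext (hcontra.trans hwn.symm)))
    have hev : ∀ m, m ≠ n → ∀ᶠ k in atTop, ((u k).1.1.1.1 m).1 p = 0 := by
      intro m hm
      by_contra hcon
      rw [Filter.not_eventually] at hcon
      have hfreq : ∃ᶠ k in atTop,
          scale p q (tk k) ((u k).1.1.1.1 m).1 ∈ {g : V → ℝ | g = ept p q (g p)} := by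
        refine hcon.mono (fun k hk => ?_)
        simp only [Set.mem_setOf_eq]
        rw [support_ept hp hpq _ hk, scale_ept hne, ept_apply_p]
      have hcl : IsClosed {g : V → ℝ | g = ept p q (g p)} := by
        apply isClosed_eq continuous_id
        apply continuous_pi
        intro v
        unfold ept
        by_cases hvp : v = p
        · simp only [if_pos hvp]; exact continuous_apply p
        by_cases hvq : v = q
        · simp only [if_neg hvp, if_pos hvq]
          exact continuous_const.sub (continuous_apply p)
        · simp only [if_neg hvp, if_neg hvq]; exact continuous_const
      have hmem : (w.1 m).1 ∈ {g : V → ℝ | g = ept p q (g p)} := by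
        apply hcl.mem_of_frequently_of_tendsto hfreq
        rw [tendsto_pi_nhds]
        exact hwc m
      rw [Set.mem_setOf_eq, hw0 m] at hmem
      exact hwm_ne m hm (hmem.trans (vertexPoint_q_val hne).symm)
    have hinj : Function.Injective (fun m => if m = n then G.vertexPoint p else w.1 m) := by
      intro a b hab
      dsimp only at hab
      by_cases han : a = n <;> by_cases hbn : b = n
      · rw [han, hbn]
      · exfalso
        rw [if_pos han, if_neg hbn] at hab
        have h1 : (G.vertexPoint p).1 p = 1 := vertexPoint_apply_self p
        rw [hab, hw0 b] at h1
        exact zero_ne_one h1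
      · exfalso
        rw [if_neg han, if_pos hbn] at hab
        have h1 : (G.vertexPoint p).1 p = 1 := vertexPoint_apply_self p
        rw [← hab, hw0 a] at h1
        exact zero_ne_one h1
      · rw [if_neg han, if_neg hbn] at hab
        exact w.2 hab
    have hcond : ∀ m, m ≠ n →
        (((if m = n then G.vertexPoint p else w.1 m) : G.Realization).1 p = 0 ∧
          (if m = n then G.vertexPoint p else w.1 m) ≠ G.vertexPoint q) := by
      intro m hm
      rw [if_neg hm]
      exact ⟨hw0 m, fun hc => hwm_ne m hm (congrArg Subtype.val hc)⟩
    refine ⟨⟨(⟨⟨fun m => if m = n then G.vertexPoint p else w.1 m, hinj⟩, if_pos rfl⟩, 0),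
      Or.inr hcond⟩, ?_, ?_⟩
    · apply tendsto_gluePiece
      · intro m v
        by_cases hm : m = n
        · subst hm
          show Tendsto (fun k => ((u k).1.1.1.1 m).1 v) atTop
            (nhds (((if m = m then G.vertexPoint p else w.1 m) : G.Realization).1 v))
          rw [if_pos rfl]
          refine tendsto_const_nhds.congr (fun k => ?_)
          rw [(u k).1.1.2]
        · show Tendsto (fun k => ((u k).1.1.1.1 m).1 v) atTop
            (nhds (((if m = n then G.vertexPoint p else w.1 m) : G.Realization).1 v))
          rw [if_neg hm]
          refine Filter.Tendsto.congr' ?_ (hwc m v)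
          filter_upwards [hev m hm] with k hk
          rw [scale_eq_self hne hk]
      · show Tendsto tk atTop (nhds ((0 : unitInterval) : ℝ))
        have h00 : ((0 : unitInterval) : ℝ) = t := ht0'.symm
        rw [h00]
        exact htk
    · apply Subtype.ext; funext m
      apply Subtype.ext
      show scale p q ((0 : unitInterval) : ℝ)
        ((if m = n then G.vertexPoint p else w.1 m) : G.Realization).1 = (w.1 m).1
      have hc0 : ((0 : unitInterval) : ℝ) = 0 := rfl
      rw [hc0]
      by_cases hm : m = n
      · rw [if_pos hm, scale_vertexPoint_p hp hpq, hm, hwn, vertexPoint_q_val hne]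
      · rw [if_neg hm, scale_eq_self hne (hw0 m)]
  · -- case 0 < t
    have htne : t ≠ 0 := ne_of_gt htpos
    have hev_pos : ∀ᶠ k in atTop, 0 < tk k := htk.eventually (eventually_gt_nhds htpos)
    have hxval : ∀ m v, (unscale hpq w t htpos hmax m).1 v =
        (if v = p then (w.1 m).1 p / t
         else if v = q then (w.1 m).1 q + (w.1 m).1 p - (w.1 m).1 p / t
         else (w.1 m).1 v) := by
      intro m v
      unfold unscale
      by_cases h : (w.1 m).1 p = 0
      · rw [dif_pos h]
        by_cases hvp : v = p
        · subst hvp; rw [if_pos rfl, h, zero_div]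
        by_cases hvq : v = q
        · subst hvq; rw [if_neg hvp, if_pos rfl, h]; ring
        · rw [if_neg hvp, if_neg hvq]
      · rw [dif_neg h]
        show ept p q ((w.1 m).1 p / t) v = _
        have hsup := support_ept hp hpq (w.1 m) h
        have hq : (w.1 m).1 q = 1 - (w.1 m).1 p := by
          conv_lhs => rw [hsup]
          rw [ept_apply_q hne]
        by_cases hvp : v = p
        · subst hvp; rw [ept_apply_p, if_pos rfl]
        by_cases hvq : v = q
        · subst hvq; rw [ept_apply_q hne, if_neg hvp, if_pos rfl, hq]; ring
        · rw [ept_apply_other hvp hvq, if_neg hvp, if_neg hvq]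
          conv_rhs => rw [hsup]
          rw [ept_apply_other hvp hvq]
    have hseq : ∀ m v, ∀ᶠ k in atTop, ((u k).1.1.1.1 m).1 v =
        (if v = p then scale p q (tk k) ((u k).1.1.1.1 m).1 p / tk k
         else if v = q then scale p q (tk k) ((u k).1.1.1.1 m).1 q
            + scale p q (tk k) ((u k).1.1.1.1 m).1 p
            - scale p q (tk k) ((u k).1.1.1.1 m).1 p / tk k
         else scale p q (tk k) ((u k).1.1.1.1 m).1 v) := by
      intro m v
      filter_upwards [hev_pos] with k hk
      have hkne : tk k ≠ 0 := ne_of_gt hk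
      by_cases hvp : v = p
      · subst hvp
        rw [if_pos rfl, scale_apply_p, mul_div_cancel_left₀ _ hkne]
      by_cases hvq : v = q
      · subst hvq
        rw [if_neg hvp, if_pos rfl, scale_apply_q hne, scale_apply_p,
          mul_div_cancel_left₀ _ hkne]
        ring
      · rw [if_neg hvp, if_neg hvq, scale_apply_other hvp hvq]
    have hxlim : ∀ m v, Tendsto (fun k => ((u k).1.1.1.1 m).1 v) atTop
        (nhds ((unscale hpq w t htpos hmax m).1 v)) := by
      intro m v
      rw [hxval m v]
      refine Filter.Tendsto.congr' (Filter.EventuallyEq.symm (hseq m v)) ?_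
      by_cases hvp : v = p
      · simp only [if_pos hvp]
        exact (hwc m p).div htk htne
      by_cases hvq : v = q
      · simp only [if_neg hvp, if_pos hvq]
        exact ((hwc m q).add (hwc m p)).sub ((hwc m p).div htk htne)
      · simp only [if_neg hvp, if_neg hvq]
        exact hwc m v
    have hxinj := unscale_inj hp hpq w t htpos hmax
    have hxn : unscale hpq w t htpos hmax n = G.vertexPoint p :=
      unscale_n hp hpq w t htpos hmax n rfl
    refine ⟨⟨(⟨⟨unscale hpq w t htpos hmax, hxinj⟩, hxn⟩, ⟨t, ht0, ht1⟩),
      Or.inl (fun h0 => htne (congrArg Subtype.val h0))⟩, ?_, ?_⟩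
    · apply tendsto_gluePiece
      · intro m v
        exact hxlim m v
      · exact htk
    · apply Subtype.ext; funext m
      apply Subtype.ext
      exact scale_unscale hp hpq w t htpos hmax m

lemma isClosedMap_glueH1 (hp : G.degree p = 1) (hpq : G.Adj p q) (n : Fin N) :
    IsClosedMap (glueH1 hp hpq n) := by
  intro C hC
  apply IsSeqClosed.isClosed
  intro s w hs hsw
  choose f hfC hfs using hs
  have hw : Tendsto (fun k => glueH1 hp hpq n (f k)) atTop (nhds w) :=
    hsw.congr (fun k => (hfs k).symm)
  obtain ⟨z, hz, hzw⟩ := glue_piece_limit hp hpq f w hw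
  exact ⟨z, hC.isSeqClosed hfC hz, hzw⟩

lemma isClosedMap_glueH0 : IsClosedMap (glueH0 : Config N (SubtreeOff G p) → _) := by
  intro C hC
  apply IsSeqClosed.isClosed
  intro s w hs hsw
  choose f hfC hfs using hs
  have hw : Tendsto (fun k => glueH0 (f k)) atTop (nhds w) :=
    hsw.congr (fun k => (hfs k).symm)
  have hwc := tendsto_config_iff.mp hw
  have h0 : ∀ m, (w.1 m).1 p = 0 := by
    intro m
    have h1 : Tendsto (fun k => (((f k).1 m).1).1 p) atTop (nhds ((w.1 m).1 p)) := hwc m p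
    have h2 : (fun k => (((f k).1 m).1).1 p) = fun _ => (0 : ℝ) := by
      funext k; exact ((f k).1 m).2
    rw [h2] at h1
    exact tendsto_nhds_unique h1 tendsto_const_nhds
  refine ⟨⟨fun m => ⟨w.1 m, h0 m⟩, fun a b hab => w.2 (congrArg Subtype.val hab)⟩, ?_, ?_⟩
  · apply hC.isSeqClosed hfC
    rw [tendsto_subtype_rng, tendsto_pi_nhds]
    intro m
    rw [tendsto_subtype_rng]
    show Tendsto (fun k => (((f k).1 m).1 : G.Realization)) atTop (nhds (w.1 m))
    rw [tendsto_subtype_rng, tendsto_pi_nhds]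
    exact hwc m
  · apply Subtype.ext; funext m; rfl

lemma isClosedMap_Hsum (hp : G.degree p = 1) (hpq : G.Adj p q) :
    IsClosedMap (Hsum hp hpq (N := N)) := by
  intro C hC
  have himg : Hsum hp hpq '' C = (glueH0 '' (Sum.inl ⁻¹' C)) ∪
      ⋃ n : Fin N, glueH1 hp hpq n '' ((fun z => Sum.inr (⟨n, z⟩ : Σ n, GluePiece G p q N n)) ⁻¹' C) := by
    ext w
    constructor
    · rintro ⟨a, haC, rfl⟩
      cases a with
      | inl y => exact Or.inl ⟨y, haC, rfl⟩
      | inr s => exact Or.inr (Set.mem_iUnion.mpr ⟨s.1, s.2, haC, rfl⟩)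
    · rintro (⟨y, hy, rfl⟩ | hw)
      · exact ⟨Sum.inl y, hy, rfl⟩
      · obtain ⟨S, ⟨n, rfl⟩, z, hz, rfl⟩ := hw
        exact ⟨Sum.inr ⟨n, z⟩, hz, rfl⟩
  rw [himg]
  apply IsClosed.union
  · exact isClosedMap_glueH0 _ (hC.preimage continuous_inl)
  · exact isClosed_iUnion_of_finite fun n => isClosedMap_glueH1 hp hpq n _
      (hC.preimage (continuous_inr.comp continuous_sigmaMk))

end Main

/-- For a finite tree `Υ` with boundary vertex `p` (valence 1) attached by the unique
edge `e` to the vertex `q`, the configuration space `C^N(Υ)` is homeomorphic to the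
space obtained from `C^N(Υ')`, `Υ' = closure(Υ - e̅)`, by gluing on, for each
`n = 1,…,N`, the piece `(Σ_n × (0,1]) ∪ (Σ'_n × {0})` along `Σ'_n × {0} ≅ Σ'_n ⊆ C^N(Υ')`. -/
theorem tree_config_space_end_decomposition
    (V : Type) [Fintype V] [DecidableEq V] (G : SimpleGraph V) [DecidableRel G.Adj]
    (hG : G.IsTree) (p q : V) (hp : G.degree p = 1) (hpq : G.Adj p q) (N : ℕ) :
    Nonempty (Config N G.Realization ≃ₜ Quot (glueRel G p q N)) := by
  let h : Quot (glueRel G p q N) → Config N G.Realization :=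
    Quot.lift (Hsum hp hpq) (Hsum_respects hp hpq)
  have hcont : Continuous h := continuous_quot_lift _ (continuous_Hsum hp hpq)
  have hsurj : Function.Surjective h := by
    intro w
    obtain ⟨a, ha⟩ := Hsum_surjective hp hpq w
    exact ⟨Quot.mk _ a, ha⟩
  have hinj : Function.Injective h := by
    intro a b
    induction a using Quot.ind with
    | _ a =>
    induction b using Quot.ind with
    | _ b =>
    exact Hsum_inj_quot hp hpq a b
  have hclosed : IsClosedMap h := by
    intro S hS
    have himg : h '' S = Hsum hp hpq '' (Quot.mk _ ⁻¹' S) := by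
      ext w
      constructor
      · rintro ⟨s, hsS, rfl⟩
        induction s using Quot.ind with
        | _ a => exact ⟨a, hsS, rfl⟩
      · rintro ⟨a, ha, rfl⟩
        exact ⟨Quot.mk _ a, ha, rfl⟩
    rw [himg]
    exact isClosedMap_Hsum hp hpq _ (hS.preimage continuous_quot_mk)
  let e := Equiv.ofBijective h ⟨hinj, hsurj⟩
  have hsymm : Continuous e.symm := by
    rw [continuous_iff_isClosed]
    intro s hs
    have heq : e.symm ⁻¹' s = e '' s := (Equiv.image_eq_preimage_symm e s).symm
    rw [heq]
    exact hclosed s hs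
  exact ⟨(Homeomorph.mk e hcont hsymm).symm⟩
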